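/- Let X ∈ ℝ^{n×m} and let k be a natural number. Then rank(X) ≤ k if and only if there exists a symmetric matrix P ∈ ℝ^{n×n} with P² = P, Tr(P) ≤ k, and P X = X. -/

import Mathlib

open Matrix

/-- `rank(X) ≤ k` iff there is a symmetric idempotent matrix `P` with `Tr(P) ≤ k`
and `P X = X`. -/
theorem rank_le_iff_exists_projection {n m : ℕ} (X : Matrix (Fin n) (Fin m) ℝ) (k : ℕ) :
    X.rank ≤ k ↔
      ∃ P : Matrix (Fin n) (Fin n) ℝ,
        Pᵀ = P ∧ P * P = P ∧ P.trace ≤ (k : ℝ) ∧ P * X = X := by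
  classical
  constructor
  · intro hrank
    set bn : Module.Basis (Fin n) ℝ (EuclideanSpace ℝ (Fin n)) := (PiLp.basisFun 2 ℝ (Fin n)) with hbn
    set bm : Module.Basis (Fin m) ℝ (EuclideanSpace ℝ (Fin m)) := (PiLp.basisFun 2 ℝ (Fin m)) with hbm
    set f : EuclideanSpace ℝ (Fin m) →ₗ[ℝ] EuclideanSpace ℝ (Fin n) :=
      Matrix.toLin bm bn X with hf
    set V : Submodule ℝ (EuclideanSpace ℝ (Fin n)) := LinearMap.range f with hV
    set p : EuclideanSpace ℝ (Fin n) →ₗ[ℝ] EuclideanSpace ℝ (Fin n) :=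
      V.subtype ∘ₗ (V.orthogonalProjectionOnto : EuclideanSpace ℝ (Fin n) →ₗ[ℝ] V) with hp
    have hfix : ∀ v ∈ V, p v = v := by
      intro v hv
      have := Submodule.orthogonalProjectionOnto_mem_subspace_eq_self (K := V) ⟨v, hv⟩
      simpa [hp] using congrArg (Subtype.val) this
    have hproj : LinearMap.IsProj V p := by
      refine ⟨fun x => ?_, fun x hx => hfix x hx⟩
      simp [hp]
    refine ⟨LinearMap.toMatrix bn bn p, ?_, ?_, ?_, ?_⟩
    · -- symmetry
      have hherm : (LinearMap.toMatrix bn bn p).IsHermitian := by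
        rw [Matrix.isHermitian_iff_isSymmetric]
        have : (LinearMap.toMatrix bn bn p).toEuclideanLin = p := by
          rw [Matrix.toEuclideanLin_eq_toLin]
          exact Matrix.toLin_toMatrix bn bn p
        rw [this]
        exact Submodule.starProjection_isSymmetric V
      rw [← Matrix.conjTranspose_eq_transpose_of_trivial]
      exact hherm
    · -- idempotence
      rw [← LinearMap.toMatrix_comp bn bn bn]
      congr 1
      exact LinearMap.ext fun x => hfix (p x) (hproj.map_mem x)
    · -- trace
      have htr : LinearMap.trace ℝ _ p = ((Module.finrank ℝ V : ℕ) : ℝ) := hproj.trace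
      have htr2 : (LinearMap.toMatrix bn bn p).trace = LinearMap.trace ℝ _ p :=
        (LinearMap.trace_eq_matrix_trace ℝ bn p).symm
      have hr : X.rank = Module.finrank ℝ V := Matrix.rank_eq_finrank_range_toLin X bn bm
      rw [htr2, htr, ← hr]
      exact_mod_cast hrank
    · -- P X = X
      have hX : X = LinearMap.toMatrix bm bn f := (LinearMap.toMatrix_toLin bm bn X).symm
      conv_lhs => rw [hX]
      rw [← LinearMap.toMatrix_comp bm bn bn]
      have : p ∘ₗ f = f :=
        LinearMap.ext fun x => hfix (f x) (LinearMap.mem_range_self f x)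
      rw [this, ← hX]
  · rintro ⟨P, hsym, hidem, htr, hPX⟩
    have h1 : X.rank ≤ P.rank := by
      conv_lhs => rw [← hPX]
      exact Matrix.rank_mul_le_left P X
    set g : (Fin n → ℝ) →ₗ[ℝ] (Fin n → ℝ) := Matrix.toLin' P with hg
    have hgg : g ∘ₗ g = g := by
      rw [hg, ← Matrix.toLin'_mul, hidem]
    have hproj : LinearMap.IsProj (LinearMap.range g) g := by
      refine ⟨fun x => LinearMap.mem_range_self g x, ?_⟩
      rintro x ⟨y, rfl⟩
      exact DFunLike.congr_fun hgg y
    have htrg : LinearMap.trace ℝ _ g = ((Module.finrank ℝ (LinearMap.range g) : ℕ) : ℝ) :=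
      hproj.trace
    have hrg : P.rank = Module.finrank ℝ (LinearMap.range g) := by
      rw [Matrix.rank_eq_finrank_range_toLin P (Pi.basisFun ℝ (Fin n)) (Pi.basisFun ℝ (Fin n))]
      rfl
    have htrP : P.trace = LinearMap.trace ℝ _ g := by
      rw [LinearMap.trace_eq_matrix_trace ℝ (Pi.basisFun ℝ (Fin n)) g]
      congr 1
      rw [hg, ← Matrix.toLin_eq_toLin', LinearMap.toMatrix_toLin]
    have hPrank : (P.rank : ℝ) ≤ (k : ℝ) := by
      rw [hrg, ← htrg, ← htrP]
      exact htr
    exact le_trans h1 (by exact_mod_cast hPrank)
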